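/- Let α : I → ℝ³ be a C² regular curve parametrized by arc-length equipped with a rotation minimizing frame {t, n₁, n₂} satisfying t' = κ₁n₁ + κ₂n₂, n₁' = −κ₁t, n₂' = −κ₂t. Then α lies on a sphere of radius r > 0 if and only if there exist constants a₁, a₂ with a₁κ₁(s) + a₂κ₂(s) + 1 = 0 for all s, and in that case r² = a₁² + a₂². -/

import Mathlib

/-- Euclidean dot product on `ℝ³`. -/
noncomputable def edot (x y : Fin 3 → ℝ) : ℝ := ∑ i, x i * y i

private lemma edot_eq (x y : Fin 3 → ℝ) :
    edot x y = x 0 * y 0 + x 1 * y 1 + x 2 * y 2 := by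
  simp [edot, Fin.sum_univ_three]

private lemma edot_comm (x y : Fin 3 → ℝ) : edot x y = edot y x := by
  simp [edot_eq]; ring

private lemma edot_hasDerivAt {f g : ℝ → Fin 3 → ℝ} {f' g' : Fin 3 → ℝ} {s : ℝ}
    (hf : HasDerivAt f f' s) (hg : HasDerivAt g g' s) :
    HasDerivAt (fun u => edot (f u) (g u)) (edot f' (g s) + edot (f s) g') s := by
  have hfi := hasDerivAt_pi.mp hf
  have hgi := hasDerivAt_pi.mp hg
  have h : HasDerivAt (fun u => ∑ i : Fin 3, f u i * g u i)
      (∑ i : Fin 3, (f' i * g s i + f s i * g' i)) s :=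
    HasDerivAt.fun_sum fun i _ => (hfi i).mul (hgi i)
  simpa [edot, Finset.sum_add_distrib] using h

private lemma frame_complete (t n₁ n₂ w : Fin 3 → ℝ)
    (htt : edot t t = 1) (h11 : edot n₁ n₁ = 1) (h22 : edot n₂ n₂ = 1)
    (ht1 : edot t n₁ = 0) (ht2 : edot t n₂ = 0) (h12 : edot n₁ n₂ = 0)
    (hwt : edot t w = 0) (hw1 : edot n₁ w = 0) (hw2 : edot n₂ w = 0) :
    w = 0 := by
  set M : Matrix (Fin 3) (Fin 3) ℝ := Matrix.of ![t, n₁, n₂] with hMdef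
  simp only [edot_eq] at htt h11 h22 ht1 ht2 h12 hwt hw1 hw2
  have hM : M * M.transpose = 1 := by
    ext i j
    fin_cases i <;> fin_cases j <;>
      simp [hMdef, Matrix.mul_apply, Matrix.transpose, Fin.sum_univ_three, Matrix.vecHead, Matrix.vecTail,
        Matrix.one_apply] <;>
      linarith
  have hM' : M.transpose * M = 1 := mul_eq_one_comm.mp hM
  have hv : M.mulVec w = 0 := by
    funext i
    fin_cases i <;>
      simp [hMdef, Matrix.mulVec, dotProduct, Fin.sum_univ_three] <;>
      linarith
  calc w = (M.transpose * M).mulVec w := by rw [hM', Matrix.one_mulVec]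
    _ = M.transpose.mulVec (M.mulVec w) := (Matrix.mulVec_mulVec _ _ _).symm
    _ = 0 := by rw [hv, Matrix.mulVec_zero]

/-- A unit-speed curve in `ℝ³` with a rotation minimizing frame `{t, n₁, n₂}` lies on
a sphere of radius `r > 0` iff there are constants `a₁, a₂` with
`a₁κ₁ + a₂κ₂ + 1 = 0`, and in that case `r² = a₁² + a₂²`. -/
theorem stmt1 (α t n₁ n₂ : ℝ → Fin 3 → ℝ) (κ₁ κ₂ : ℝ → ℝ) (r : ℝ) (hr : 0 < r)
    (hα : ContDiff ℝ 2 α)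
    (ht : ∀ s, t s = deriv α s)
    (htt : ∀ s, edot (t s) (t s) = 1)
    (hn₁n₁ : ∀ s, edot (n₁ s) (n₁ s) = 1)
    (hn₂n₂ : ∀ s, edot (n₂ s) (n₂ s) = 1)
    (htn₁ : ∀ s, edot (t s) (n₁ s) = 0)
    (htn₂ : ∀ s, edot (t s) (n₂ s) = 0)
    (hn₁n₂ : ∀ s, edot (n₁ s) (n₂ s) = 0)
    (hdiff₁ : Differentiable ℝ n₁) (hdiff₂ : Differentiable ℝ n₂)
    (hdt : ∀ s, deriv t s = κ₁ s • n₁ s + κ₂ s • n₂ s)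
    (hdn₁ : ∀ s, deriv n₁ s = -(κ₁ s) • t s)
    (hdn₂ : ∀ s, deriv n₂ s = -(κ₂ s) • t s) :
    (∃ P : Fin 3 → ℝ, ∀ s, edot (α s - P) (α s - P) = r ^ 2) ↔
      ∃ a₁ a₂ : ℝ, (∀ s, a₁ * κ₁ s + a₂ * κ₂ s + 1 = 0) ∧ r ^ 2 = a₁ ^ 2 + a₂ ^ 2 := by
  -- basic differentiability facts
  have hαd : Differentiable ℝ α := hα.differentiable two_ne_zero
  have hα2 : ContDiff ℝ ((1 : ℕ) + 1) α := by exact_mod_cast hα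
  have hderiv_cd : ContDiff ℝ 1 (deriv α) := (contDiff_succ_iff_deriv.mp hα2).2.2
  have htd : Differentiable ℝ t := by
    have : Differentiable ℝ (deriv α) := hderiv_cd.differentiable one_ne_zero
    have ht' : t = deriv α := funext ht
    rw [ht']; exact this
  have hαt : ∀ s, HasDerivAt α (t s) s := by
    intro s; rw [ht s]; exact (hαd s).hasDerivAt
  have hdts : ∀ s, HasDerivAt t (κ₁ s • n₁ s + κ₂ s • n₂ s) s := by
    intro s; rw [← hdt s]; exact (htd s).hasDerivAt
  have hdn₁s : ∀ s, HasDerivAt n₁ (-(κ₁ s) • t s) s := by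
    intro s; rw [← hdn₁ s]; exact (hdiff₁ s).hasDerivAt
  have hdn₂s : ∀ s, HasDerivAt n₂ (-(κ₂ s) • t s) s := by
    intro s; rw [← hdn₂ s]; exact (hdiff₂ s).hasDerivAt
  constructor
  · rintro ⟨P, hP⟩
    set v : ℝ → Fin 3 → ℝ := fun s => α s - P with hvdef
    have hvd : ∀ s, HasDerivAt v (t s) s := fun s => (hαt s).sub_const P
    -- ⟨t, v⟩ = 0
    have htv : ∀ s, edot (t s) (v s) = 0 := by
      intro s
      have h1 : HasDerivAt (fun u => edot (v u) (v u))
          (edot (t s) (v s) + edot (v s) (t s)) s := edot_hasDerivAt (hvd s) (hvd s)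
      have h2 : HasDerivAt (fun u => edot (v u) (v u)) 0 s := by
        have h3 : (fun u => edot (v u) (v u)) = fun _ => r ^ 2 := funext fun u => hP u
        rw [h3]; exact hasDerivAt_const s _
      have := h1.unique h2
      rw [edot_comm (v s) (t s)] at this
      linarith
    -- ⟨n₁, v⟩ and ⟨n₂, v⟩ are constant
    have hf₁ : ∀ s, HasDerivAt (fun u => edot (n₁ u) (v u)) 0 s := by
      intro s
      have h1 := edot_hasDerivAt (hdn₁s s) (hvd s)
      have : edot (-(κ₁ s) • t s) (v s) + edot (n₁ s) (t s) = 0 := by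
        rw [edot_comm (n₁ s) (t s)]
        have h2 := htv s; have h3 := htn₁ s
        simp only [edot_eq] at h2 h3 ⊢
        simp only [Pi.smul_apply, smul_eq_mul]
        linear_combination (-(κ₁ s)) * h2 + h3
      rwa [this] at h1
    have hf₂ : ∀ s, HasDerivAt (fun u => edot (n₂ u) (v u)) 0 s := by
      intro s
      have h1 := edot_hasDerivAt (hdn₂s s) (hvd s)
      have : edot (-(κ₂ s) • t s) (v s) + edot (n₂ s) (t s) = 0 := by
        rw [edot_comm (n₂ s) (t s)]
        have h2 := htv s; have h3 := htn₂ s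
        simp only [edot_eq] at h2 h3 ⊢
        simp only [Pi.smul_apply, smul_eq_mul]
        linear_combination (-(κ₂ s)) * h2 + h3
      rwa [this] at h1
    set a₁ : ℝ := edot (n₁ 0) (v 0) with ha₁
    set a₂ : ℝ := edot (n₂ 0) (v 0) with ha₂
    have hc₁ : ∀ s, edot (n₁ s) (v s) = a₁ := fun s =>
      is_const_of_deriv_eq_zero (fun u => (hf₁ u).differentiableAt)
        (fun u => (hf₁ u).deriv) s 0
    have hc₂ : ∀ s, edot (n₂ s) (v s) = a₂ := fun s =>
      is_const_of_deriv_eq_zero (fun u => (hf₂ u).differentiableAt)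
        (fun u => (hf₂ u).deriv) s 0
    refine ⟨a₁, a₂, ?_, ?_⟩
    · intro s
      have h1 : HasDerivAt (fun u => edot (t u) (v u))
          (edot (κ₁ s • n₁ s + κ₂ s • n₂ s) (v s) + edot (t s) (t s)) s :=
        edot_hasDerivAt (hdts s) (hvd s)
      have h2 : HasDerivAt (fun u => edot (t u) (v u)) 0 s := by
        have h3 : (fun u => edot (t u) (v u)) = fun _ => 0 := funext fun u => htv u
        rw [h3]; exact hasDerivAt_const s _
      have h4 := h1.unique h2
      have e1 : edot (κ₁ s • n₁ s + κ₂ s • n₂ s) (v s)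
          = κ₁ s * edot (n₁ s) (v s) + κ₂ s * edot (n₂ s) (v s) := by
        simp [edot_eq, Pi.add_apply, Pi.smul_apply, smul_eq_mul]; ring
      rw [e1, htt s, hc₁ s, hc₂ s] at h4
      linear_combination h4
    · -- r² = a₁² + a₂²
      have hw : v 0 - (a₁ • n₁ 0 + a₂ • n₂ 0) = 0 := by
        apply frame_complete (t 0) (n₁ 0) (n₂ 0) _ (htt 0) (hn₁n₁ 0) (hn₂n₂ 0)
          (htn₁ 0) (htn₂ 0) (hn₁n₂ 0)
        · have h2 := htv 0; have h3 := htn₁ 0; have h4 := htn₂ 0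
          simp only [edot_eq] at h2 h3 h4 ⊢
          simp only [Pi.sub_apply, Pi.add_apply, Pi.smul_apply, smul_eq_mul]
          linear_combination h2 - a₁ * h3 - a₂ * h4
        · have h2 := hc₁ 0; have h3 := hn₁n₁ 0; have h4 := hn₁n₂ 0
          simp only [edot_eq] at h2 h3 h4 ⊢
          simp only [Pi.sub_apply, Pi.add_apply, Pi.smul_apply, smul_eq_mul]
          linear_combination h2 - a₁ * h3 - a₂ * h4
        · have h2 := hc₂ 0; have h3 := hn₂n₂ 0; have h4 := hn₁n₂ 0
          rw [edot_comm] at h4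
          simp only [edot_eq] at h2 h3 h4 ⊢
          simp only [Pi.sub_apply, Pi.add_apply, Pi.smul_apply, smul_eq_mul]
          linear_combination h2 - a₂ * h3 - a₁ * h4
      have hv0 : v 0 = a₁ • n₁ 0 + a₂ • n₂ 0 := by
        have := hw; rwa [sub_eq_zero] at this
      have := hP 0
      rw [show α 0 - P = v 0 from rfl, hv0] at this
      have e2 : edot (a₁ • n₁ 0 + a₂ • n₂ 0) (a₁ • n₁ 0 + a₂ • n₂ 0)
          = a₁ ^ 2 * edot (n₁ 0) (n₁ 0) + 2 * a₁ * a₂ * edot (n₁ 0) (n₂ 0)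
            + a₂ ^ 2 * edot (n₂ 0) (n₂ 0) := by
        simp [edot_eq, Pi.add_apply, Pi.smul_apply, smul_eq_mul]; ring
      rw [e2, hn₁n₁ 0, hn₁n₂ 0, hn₂n₂ 0] at this
      rw [← this]; ring
  · rintro ⟨a₁, a₂, hrel, hr2⟩
    set F : ℝ → Fin 3 → ℝ := fun s => α s - a₁ • n₁ s - a₂ • n₂ s with hFdef
    have hFd : ∀ s, HasDerivAt F 0 s := by
      intro s
      have h1 : HasDerivAt F
          (t s - a₁ • (-(κ₁ s) • t s) - a₂ • (-(κ₂ s) • t s)) s :=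
        (((hαt s).sub ((hdn₁s s).const_smul a₁)).sub ((hdn₂s s).const_smul a₂))
      have h2 : t s - a₁ • (-(κ₁ s) • t s) - a₂ • (-(κ₂ s) • t s) = 0 := by
        funext i
        simp only [Pi.sub_apply, Pi.smul_apply, smul_eq_mul, Pi.zero_apply]
        linear_combination (t s i) * hrel s
      rwa [h2] at h1
    have hFc : ∀ s, F s = F 0 := fun s =>
      is_const_of_deriv_eq_zero (fun u => (hFd u).differentiableAt)
        (fun u => (hFd u).deriv) s 0
    refine ⟨F 0, fun s => ?_⟩
    have h5 : α s - F 0 = a₁ • n₁ s + a₂ • n₂ s := by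
      rw [← hFc s, hFdef]
      funext i
      simp [Pi.sub_apply, Pi.add_apply, Pi.smul_apply]
      ring
    rw [h5]
    have e2 : edot (a₁ • n₁ s + a₂ • n₂ s) (a₁ • n₁ s + a₂ • n₂ s)
        = a₁ ^ 2 * edot (n₁ s) (n₁ s) + 2 * a₁ * a₂ * edot (n₁ s) (n₂ s)
          + a₂ ^ 2 * edot (n₂ s) (n₂ s) := by
      simp [edot_eq, Pi.add_apply, Pi.smul_apply, smul_eq_mul]; ring
    rw [e2, hn₁n₁ s, hn₁n₂ s, hn₂n₂ s, hr2]; ring
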